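/- Let q = 2^m with m > 3. For any two distinct fixed elements x_1, x_2 ∈ F_q^*, the number of unordered triples {x_3, x_4, x_5} such that x_1, ..., x_5 are pairwise distinct nonzero elements of F_q and the 5×5 matrix with rows given by the 0th, 2nd, 3rd, 4th, 5th powers of x_1, ..., x_5 is singular equals (q-4)(q-8)/6. -/

import Mathlib

open Finset

set_option maxHeartbeats 4000000 in
lemma det5 {R : Type*} [CommRing R] (a b c d e : R) :
    Matrix.det !![1, 1, 1, 1, 1;
                  a^2, b^2, c^2, d^2, e^2;
                  a^3, b^3, c^3, d^3, e^3;
                  a^4, b^4, c^4, d^4, e^4;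
                  a^5, b^5, c^5, d^5, e^5] =
    (a*b*c*d + a*b*c*e + a*b*d*e + a*c*d*e + b*c*d*e) *
    ((b-a)*(c-a)*(d-a)*(e-a)*(c-b)*(d-b)*(e-b)*(d-c)*(e-c)*(e-d)) := by
  simp [Matrix.det_succ_row_zero, Fin.sum_univ_succ, Fin.succAbove]
  ring

lemma e4_eq {F : Type*} [Field F] (x₁ x₂ x₃ x₄ x₅ : F) (h1 : x₁ ≠ 0) (h2 : x₂ ≠ 0)
    (h3 : x₃ ≠ 0) (h4 : x₄ ≠ 0) (h5 : x₅ ≠ 0) :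
    x₁*x₂*x₃*x₄ + x₁*x₂*x₃*x₅ + x₁*x₂*x₄*x₅ + x₁*x₃*x₄*x₅ + x₂*x₃*x₄*x₅ =
    (x₁⁻¹ + x₂⁻¹ + x₃⁻¹ + x₄⁻¹ + x₅⁻¹) * (x₁*x₂*x₃*x₄*x₅) := by
  have e1 := mul_inv_cancel₀ h1
  have e2 := mul_inv_cancel₀ h2
  have e3 := mul_inv_cancel₀ h3
  have e4 := mul_inv_cancel₀ h4
  have e5 := mul_inv_cancel₀ h5
  linear_combination -(x₂*x₃*x₄*x₅)*e1 - (x₁*x₃*x₄*x₅)*e2 - (x₁*x₂*x₄*x₅)*e3 -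
    (x₁*x₂*x₃*x₅)*e4 - (x₁*x₂*x₃*x₄)*e5

set_option maxHeartbeats 1000000 in
lemma countA (F : Type*) [Field F] [Fintype F] [DecidableEq F] (htwo : (2:F) = 0)
    (y₁ y₂ : F) (hy1 : y₁ ≠ 0) (hy2 : y₂ ≠ 0) (hy12 : y₁ ≠ y₂) :
    6 * ((Finset.univ.filter (fun s : Finset F =>
        s.card = 3 ∧ (0:F) ∉ s ∧ y₁ ∉ s ∧ y₂ ∉ s ∧ s.sum id = y₁ + y₂)).card)
      = (Fintype.card F - 4) * (Fintype.card F - 8) := by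
  have hadd : ∀ z w : F, z + w = 0 → z = w := fun z w h => by linear_combination h - w * htwo
  have hcc0 : y₁ + y₂ ≠ 0 := fun h => hy12 (hadd _ _ h)
  have hccy1 : y₁ + y₂ ≠ y₁ := fun h => hy2 (by linear_combination h)
  have hccy2 : y₁ + y₂ ≠ y₂ := fun h => hy1 (by linear_combination h)
  set A : Finset (Finset F) := Finset.univ.filter (fun s : Finset F =>
        s.card = 3 ∧ (0:F) ∉ s ∧ y₁ ∉ s ∧ y₂ ∉ s ∧ s.sum id = y₁ + y₂) with hA
  set T : Finset F := {0, y₁, y₂, y₁ + y₂} with hT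
  set B : F → Finset F := fun a => {0, y₁, y₂, y₁ + y₂, a, y₁ + y₂ + a, y₂ + a, y₁ + a} with hB
  have hTcard : T.card = 4 := by
    rw [hT, card_insert_of_notMem (by
        simp only [mem_insert, mem_singleton]; push_neg
        exact ⟨fun h => hy1 h.symm, fun h => hy2 h.symm, fun h => hcc0 h.symm⟩),
      card_insert_of_notMem (by
        simp only [mem_insert, mem_singleton]; push_neg
        exact ⟨hy12, fun h => hccy1 h.symm⟩),
      card_insert_of_notMem (by
        simp only [mem_singleton]
        exact fun h => hccy2 h.symm),
      card_singleton]
  have hBcard : ∀ a : F, a ∉ T → (B a).card = 8 := by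
    intro a haT
    simp only [hT, mem_insert, mem_singleton] at haT
    push_neg at haT
    obtain ⟨ha0, hay1, hay2, hacc⟩ := haT
    simp only [hB]
    rw [card_insert_of_notMem (by
        simp only [mem_insert, mem_singleton]; push_neg
        exact ⟨fun h => hy1 h.symm, fun h => hy2 h.symm, fun h => hcc0 h.symm,
          fun h => ha0 h.symm,
          fun h => hacc (by linear_combination -h - y₁*htwo - y₂*htwo),
          fun h => hay2 (by linear_combination -h - y₂*htwo),
          fun h => hay1 (by linear_combination -h - y₁*htwo)⟩),
      card_insert_of_notMem (by
        simp only [mem_insert, mem_singleton]; push_neg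
        exact ⟨hy12, fun h => hccy1 h.symm, fun h => hay1 h.symm,
          fun h => hay2 (by linear_combination -h - y₂*htwo),
          fun h => hacc (by linear_combination -h - y₂*htwo),
          fun h => ha0 (by linear_combination -h)⟩),
      card_insert_of_notMem (by
        simp only [mem_insert, mem_singleton]; push_neg
        exact ⟨fun h => hccy2 h.symm, fun h => hay2 h.symm,
          fun h => hay1 (by linear_combination -h - y₁*htwo),
          fun h => ha0 (by linear_combination -h),
          fun h => hacc (by linear_combination -h - y₁*htwo)⟩),
      card_insert_of_notMem (by
        simp only [mem_insert, mem_singleton]; push_neg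
        exact ⟨fun h => hacc h.symm,
          fun h => ha0 (by linear_combination -h),
          fun h => hay1 (by linear_combination -h),
          fun h => hay2 (by linear_combination -h)⟩),
      card_insert_of_notMem (by
        simp only [mem_insert, mem_singleton]; push_neg
        exact ⟨fun h => hy12 (by linear_combination -h - y₂*htwo),
          fun h => hy2 (by linear_combination -h),
          fun h => hy1 (by linear_combination -h)⟩),
      card_insert_of_notMem (by
        simp only [mem_insert, mem_singleton]; push_neg
        exact ⟨fun h => hy1 (by linear_combination h),
          fun h => hy2 (by linear_combination h)⟩),
      card_insert_of_notMem (by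
        simp only [mem_singleton]
        exact fun h => hy12 (by linear_combination -h)),
      card_singleton]
  -- the set of ordered pairs
  set D : Finset (F × F) :=
    (Finset.univ \ T).biUnion (fun a => (Finset.univ \ B a).image (fun b => (a, b))) with hD
  have hDmem : ∀ p : F × F, p ∈ D ↔ p.1 ∉ T ∧ p.2 ∉ B p.1 := by
    rintro ⟨a, b⟩
    simp only [hD, Finset.mem_biUnion, Finset.mem_image, Finset.mem_sdiff, Finset.mem_univ,
      true_and, Prod.mk.injEq]
    constructor
    · rintro ⟨a', ha', b', hb', rfl, rfl⟩
      exact ⟨ha', hb'⟩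
    · rintro ⟨h1, h2⟩
      exact ⟨a, h1, b, h2, rfl, rfl⟩
  have hDcard : D.card = (Fintype.card F - 4) * (Fintype.card F - 8) := by
    rw [hD, Finset.card_biUnion (by
      intro a _ a' _ hne
      rw [Function.onFun, Finset.disjoint_left]
      rintro ⟨x, y⟩ hx hx'
      simp only [Finset.mem_image, Prod.mk.injEq] at hx hx'
      obtain ⟨b, _, rfl, rfl⟩ := hx
      obtain ⟨b', _, h1, _⟩ := hx'
      exact hne h1.symm)]
    have : ∀ a ∈ Finset.univ \ T, ((Finset.univ \ B a).image (fun b => (a, b))).card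
        = Fintype.card F - 8 := by
      intro a ha
      rw [Finset.card_image_of_injective _ (fun b b' h => congrArg Prod.snd h),
        Finset.card_sdiff_of_subset (Finset.subset_univ _), Finset.card_univ,
        hBcard a (Finset.mem_sdiff.mp ha).2]
    rw [Finset.sum_congr rfl this, Finset.sum_const,
      Finset.card_sdiff_of_subset (Finset.subset_univ _), Finset.card_univ, hTcard, smul_eq_mul]
  -- the map to triples
  set g : F × F → Finset F := fun p => {p.1, p.2, y₁ + y₂ + p.1 + p.2} with hg
  have hgA : ∀ p ∈ D, g p ∈ A := by
    rintro ⟨a, b⟩ hp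
    obtain ⟨haT, hbB⟩ := (hDmem _).mp hp
    simp only [hT, mem_insert, mem_singleton] at haT
    push_neg at haT
    obtain ⟨ha0, hay1, hay2, hacc⟩ := haT
    simp only [hB, mem_insert, mem_singleton] at hbB
    push_neg at hbB
    obtain ⟨hb0, hby1, hby2, hbcc, hba, hb1, hb2, hb3⟩ := hbB
    have hab : a ≠ b := hba.symm
    have hat : a ≠ y₁ + y₂ + a + b := fun h =>
      hbcc (by linear_combination -h - y₁*htwo - y₂*htwo)
    have hbt : b ≠ y₁ + y₂ + a + b := fun h =>
      hacc (by linear_combination -h - y₁*htwo - y₂*htwo)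
    simp only [hA, hg, Finset.mem_filter, Finset.mem_univ, true_and]
    refine ⟨Finset.card_eq_three.mpr ⟨a, b, y₁+y₂+a+b, hab, hat, hbt, rfl⟩, ?_, ?_, ?_, ?_⟩
    · simp only [mem_insert, mem_singleton]; push_neg
      exact ⟨fun h => ha0 h.symm, fun h => hb0 h.symm,
        fun h => hb1 (by linear_combination -h - (y₁+y₂+a)*htwo)⟩
    · simp only [mem_insert, mem_singleton]; push_neg
      exact ⟨fun h => hay1 h.symm, fun h => hby1 h.symm,
        fun h => hb2 (by linear_combination -h - (y₂+a)*htwo)⟩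
    · simp only [mem_insert, mem_singleton]; push_neg
      exact ⟨fun h => hay2 h.symm, fun h => hby2 h.symm,
        fun h => hb3 (by linear_combination -h - (y₁+a)*htwo)⟩
    · rw [Finset.sum_insert (by
          simp only [mem_insert, mem_singleton]; push_neg; exact ⟨hab, hat⟩),
        Finset.sum_insert (by simp only [mem_singleton]; exact hbt),
        Finset.sum_singleton]
      simp only [id]
      linear_combination a*htwo + b*htwo
  have hfiber : ∀ s ∈ A, D.filter (fun p => g p = s) = s.offDiag := by
    intro s hs
    simp only [hA, Finset.mem_filter, Finset.mem_univ, true_and] at hs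
    obtain ⟨hc3, h0s, h1s, h2s, hsums⟩ := hs
    have hmem0 : ∀ x ∈ s, x ≠ (0:F) := fun x hx h => h0s (h ▸ hx)
    have hmemy1 : ∀ x ∈ s, x ≠ y₁ := fun x hx h => h1s (h ▸ hx)
    have hmemy2 : ∀ x ∈ s, x ≠ y₂ := fun x hx h => h2s (h ▸ hx)
    ext ⟨a, b⟩
    simp only [Finset.mem_filter, Finset.mem_offDiag]
    constructor
    · rintro ⟨hpD, hgps⟩
      obtain ⟨haT, hbB⟩ := (hDmem _).mp hpD
      have hba : b ≠ a := by
        intro h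
        exact hbB (by rw [h]; simp [hB])
      refine ⟨?_, ?_, hba.symm⟩
      · rw [← hgps]; simp [hg]
      · rw [← hgps]; simp [hg]
    · rintro ⟨ha, hb, hab⟩
      have hbs' : b ∈ s.erase a := Finset.mem_erase.mpr ⟨hab.symm, hb⟩
      have hcard_e : ((s.erase a).erase b).card = 1 := by
        rw [Finset.card_erase_of_mem hbs', Finset.card_erase_of_mem ha, hc3]
      obtain ⟨w, hw⟩ := Finset.card_eq_one.mp hcard_e
      have hws : s = insert a (insert b {w}) := by
        rw [← hw, Finset.insert_erase hbs', Finset.insert_erase ha]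
      have hwmem : w ∈ (s.erase a).erase b := by rw [hw]; exact Finset.mem_singleton_self w
      have hwb : w ≠ b := (Finset.mem_erase.mp hwmem).1
      have hwa : w ≠ a := (Finset.mem_erase.mp (Finset.mem_erase.mp hwmem).2).1
      have hwss : w ∈ s := (Finset.mem_erase.mp (Finset.mem_erase.mp hwmem).2).2
      have hsum3 : a + (b + w) = y₁ + y₂ := by
        rw [hws, Finset.sum_insert (by
            simp only [mem_insert, mem_singleton]; push_neg
            exact ⟨hab, fun h => hwa h.symm⟩),
          Finset.sum_insert (by
            simp only [mem_singleton]; exact fun h => hwb h.symm),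
          Finset.sum_singleton] at hsums
        simpa using hsums
      have hw_eq : w = y₁ + y₂ + a + b := by linear_combination hsum3 - a*htwo - b*htwo
      refine ⟨(hDmem _).mpr ⟨?_, ?_⟩, ?_⟩
      · simp only [hT, mem_insert, mem_singleton]; push_neg
        refine ⟨hmem0 a ha, hmemy1 a ha, hmemy2 a ha, ?_⟩
        intro h
        exact hwb (by linear_combination -hsum3 + h + w*htwo)
      · simp only [hB, mem_insert, mem_singleton]; push_neg
        refine ⟨hmem0 b hb, hmemy1 b hb, hmemy2 b hb, ?_, hab.symm, ?_, ?_, ?_⟩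
        · intro h
          exact hwa (by linear_combination -hsum3 + h + w*htwo)
        · intro h
          exact hmem0 w hwss (by linear_combination hsum3 - h - a*htwo)
        · intro h
          exact hmemy1 w hwss (by linear_combination hsum3 - h - a*htwo)
        · intro h
          exact hmemy2 w hwss (by linear_combination hsum3 - h - a*htwo)
      · show g (a, b) = s
        simp only [hg]
        rw [hws, hw_eq]
  have hmain : D.card = ∑ s ∈ A, (D.filter (fun p => g p = s)).card :=
    Finset.card_eq_sum_card_fiberwise hgA
  have hsix : ∀ s ∈ A, (D.filter (fun p => g p = s)).card = 6 := by
    intro s hs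
    rw [hfiber s hs, Finset.offDiag_card,
      (Finset.mem_filter.mp hs).2.1]
  rw [hmain, Finset.sum_congr rfl hsix, Finset.sum_const, smul_eq_mul, mul_comm] at hDcard
  exact hDcard

set_option maxHeartbeats 1000000 in
set_option maxRecDepth 4000 in
theorem stmt14 (m : ℕ) (hm : 3 < m)
    (F : Type*) [Field F] [Fintype F] [DecidableEq F]
    (hF : Fintype.card F = 2 ^ m)
    (x₁ x₂ : F) (h1 : x₁ ≠ 0) (h2 : x₂ ≠ 0) (h12 : x₁ ≠ x₂) :
    {s : Finset F | ∃ x₃ x₄ x₅ : F, s = {x₃, x₄, x₅} ∧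
      x₃ ≠ x₄ ∧ x₃ ≠ x₅ ∧ x₄ ≠ x₅ ∧
      x₃ ≠ 0 ∧ x₄ ≠ 0 ∧ x₅ ≠ 0 ∧
      x₃ ≠ x₁ ∧ x₃ ≠ x₂ ∧ x₄ ≠ x₁ ∧ x₄ ≠ x₂ ∧ x₅ ≠ x₁ ∧ x₅ ≠ x₂ ∧
      Matrix.det !![1, 1, 1, 1, 1;
                    x₁^2, x₂^2, x₃^2, x₄^2, x₅^2;
                    x₁^3, x₂^3, x₃^3, x₄^3, x₅^3;
                    x₁^4, x₂^4, x₃^4, x₄^4, x₅^4;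
                    x₁^5, x₂^5, x₃^5, x₄^5, x₅^5] = 0}.ncard
      = (2 ^ m - 4) * (2 ^ m - 8) / 6 := by
  have htwo : (2:F) = 0 := by
    have h0 : ((Fintype.card F : ℕ) : F) = 0 := FiniteField.cast_card_eq_zero F
    rw [hF] at h0
    push_cast at h0
    exact (pow_eq_zero_iff (by omega)).mp h0
  have hy12 : x₁⁻¹ ≠ x₂⁻¹ := fun h => h12 (inv_injective h)
  set A : Finset (Finset F) := Finset.univ.filter (fun s : Finset F =>
      s.card = 3 ∧ (0:F) ∉ s ∧ x₁⁻¹ ∉ s ∧ x₂⁻¹ ∉ s ∧ s.sum id = x₁⁻¹ + x₂⁻¹) with hA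
  set f : Finset F → Finset F := fun s => s.image (·⁻¹) with hf
  have hinj : Function.Injective f := Function.Involutive.injective (fun s => by
    simp [hf, Finset.image_image, Function.comp_def, inv_inv])
  have hSeq : {s : Finset F | ∃ x₃ x₄ x₅ : F, s = {x₃, x₄, x₅} ∧
      x₃ ≠ x₄ ∧ x₃ ≠ x₅ ∧ x₄ ≠ x₅ ∧
      x₃ ≠ 0 ∧ x₄ ≠ 0 ∧ x₅ ≠ 0 ∧
      x₃ ≠ x₁ ∧ x₃ ≠ x₂ ∧ x₄ ≠ x₁ ∧ x₄ ≠ x₂ ∧ x₅ ≠ x₁ ∧ x₅ ≠ x₂ ∧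
      Matrix.det !![1, 1, 1, 1, 1;
                    x₁^2, x₂^2, x₃^2, x₄^2, x₅^2;
                    x₁^3, x₂^3, x₃^3, x₄^3, x₅^3;
                    x₁^4, x₂^4, x₃^4, x₄^4, x₅^4;
                    x₁^5, x₂^5, x₃^5, x₄^5, x₅^5] = 0} = ↑(A.image f) := by
    ext s
    simp only [Set.mem_setOf_eq, Finset.coe_image, Set.mem_image, Finset.mem_coe]
    constructor
    · rintro ⟨x₃, x₄, x₅, rfl, h34, h35, h45, h30, h40, h50, h31, h32, h41, h42, h51, h52, hdet⟩
      rw [det5] at hdet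
      have hV : ((x₂-x₁)*(x₃-x₁)*(x₄-x₁)*(x₅-x₁)*(x₃-x₂)*(x₄-x₂)*(x₅-x₂)*(x₄-x₃)*(x₅-x₃)*(x₅-x₄)) ≠ 0 :=
        mul_ne_zero (mul_ne_zero (mul_ne_zero (mul_ne_zero (mul_ne_zero (mul_ne_zero
          (mul_ne_zero (mul_ne_zero (mul_ne_zero
            (sub_ne_zero.mpr (Ne.symm h12)) (sub_ne_zero.mpr h31)) (sub_ne_zero.mpr h41))
            (sub_ne_zero.mpr h51)) (sub_ne_zero.mpr h32)) (sub_ne_zero.mpr h42))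
            (sub_ne_zero.mpr h52)) (sub_ne_zero.mpr (Ne.symm h34)))
            (sub_ne_zero.mpr (Ne.symm h35))) (sub_ne_zero.mpr (Ne.symm h45))
      have he4 : x₁*x₂*x₃*x₄ + x₁*x₂*x₃*x₅ + x₁*x₂*x₄*x₅ + x₁*x₃*x₄*x₅ + x₂*x₃*x₄*x₅ = 0 := by
        rcases mul_eq_zero.mp hdet with h | h
        · exact h
        · exact absurd h hV
      have hprod : x₁*x₂*x₃*x₄*x₅ ≠ 0 :=
        mul_ne_zero (mul_ne_zero (mul_ne_zero (mul_ne_zero h1 h2) h30) h40) h50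
      have hsum5 : x₁⁻¹ + x₂⁻¹ + x₃⁻¹ + x₄⁻¹ + x₅⁻¹ = 0 := by
        have hk := e4_eq x₁ x₂ x₃ x₄ x₅ h1 h2 h30 h40 h50
        rw [he4] at hk
        rcases mul_eq_zero.mp hk.symm with h | h
        · exact h
        · exact absurd h hprod
      have i34 : x₃⁻¹ ≠ x₄⁻¹ := fun h => h34 (inv_injective h)
      have i35 : x₃⁻¹ ≠ x₅⁻¹ := fun h => h35 (inv_injective h)
      have i45 : x₄⁻¹ ≠ x₅⁻¹ := fun h => h45 (inv_injective h)
      refine ⟨{x₃⁻¹, x₄⁻¹, x₅⁻¹}, ?_, ?_⟩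
      · simp only [hA, Finset.mem_filter, Finset.mem_univ, true_and]
        refine ⟨Finset.card_eq_three.mpr ⟨_, _, _, i34, i35, i45, rfl⟩, ?_, ?_, ?_, ?_⟩
        · simp only [mem_insert, mem_singleton]; push_neg
          exact ⟨fun h => inv_ne_zero h30 h.symm, fun h => inv_ne_zero h40 h.symm,
            fun h => inv_ne_zero h50 h.symm⟩
        · simp only [mem_insert, mem_singleton]; push_neg
          exact ⟨fun h => h31 (inv_injective h.symm), fun h => h41 (inv_injective h.symm),
            fun h => h51 (inv_injective h.symm)⟩
        · simp only [mem_insert, mem_singleton]; push_neg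
          exact ⟨fun h => h32 (inv_injective h.symm), fun h => h42 (inv_injective h.symm),
            fun h => h52 (inv_injective h.symm)⟩
        · rw [Finset.sum_insert (by
              simp only [mem_insert, mem_singleton]; push_neg; exact ⟨i34, i35⟩),
            Finset.sum_insert (by simp only [mem_singleton]; exact i45),
            Finset.sum_singleton]
          simp only [id]
          linear_combination hsum5 - x₁⁻¹*htwo - x₂⁻¹*htwo
      · simp [hf, Finset.image_insert, Finset.image_singleton, inv_inv]
    · rintro ⟨t, htA, rfl⟩
      simp only [hA, Finset.mem_filter, Finset.mem_univ, true_and] at htA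
      obtain ⟨hc3, h0t, h1t, h2t, hsumt⟩ := htA
      obtain ⟨u, v, w, huv, huw, hvw, rfl⟩ := Finset.card_eq_three.mp hc3
      have hu : u ∈ ({u, v, w} : Finset F) := by simp
      have hv : v ∈ ({u, v, w} : Finset F) := by simp
      have hw : w ∈ ({u, v, w} : Finset F) := by simp
      have hu0 : u ≠ 0 := fun h => h0t (h ▸ hu)
      have hv0 : v ≠ 0 := fun h => h0t (h ▸ hv)
      have hw0 : w ≠ 0 := fun h => h0t (h ▸ hw)
      have hsum : u + (v + w) = x₁⁻¹ + x₂⁻¹ := by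
        rw [Finset.sum_insert (by
            simp only [mem_insert, mem_singleton]; push_neg; exact ⟨huv, huw⟩),
          Finset.sum_insert (by simp only [mem_singleton]; exact hvw),
          Finset.sum_singleton] at hsumt
        simpa using hsumt
      have he4 : x₁*x₂*u⁻¹*v⁻¹ + x₁*x₂*u⁻¹*w⁻¹ + x₁*x₂*v⁻¹*w⁻¹ + x₁*u⁻¹*v⁻¹*w⁻¹
          + x₂*u⁻¹*v⁻¹*w⁻¹ = 0 := by
        rw [e4_eq x₁ x₂ u⁻¹ v⁻¹ w⁻¹ h1 h2 (inv_ne_zero hu0) (inv_ne_zero hv0) (inv_ne_zero hw0)]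
        apply mul_eq_zero_of_left
        rw [inv_inv, inv_inv, inv_inv]
        linear_combination hsum + x₁⁻¹*htwo + x₂⁻¹*htwo
      refine ⟨u⁻¹, v⁻¹, w⁻¹, by simp [hf, Finset.image_insert, Finset.image_singleton],
        fun h => huv (inv_injective h), fun h => huw (inv_injective h),
        fun h => hvw (inv_injective h),
        inv_ne_zero hu0, inv_ne_zero hv0, inv_ne_zero hw0,
        fun h => h1t (by rw [show x₁⁻¹ = u by rw [← h, inv_inv]]; exact hu),
        fun h => h2t (by rw [show x₂⁻¹ = u by rw [← h, inv_inv]]; exact hu),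
        fun h => h1t (by rw [show x₁⁻¹ = v by rw [← h, inv_inv]]; exact hv),
        fun h => h2t (by rw [show x₂⁻¹ = v by rw [← h, inv_inv]]; exact hv),
        fun h => h1t (by rw [show x₁⁻¹ = w by rw [← h, inv_inv]]; exact hw),
        fun h => h2t (by rw [show x₂⁻¹ = w by rw [← h, inv_inv]]; exact hw),
        by rw [det5, he4, zero_mul]⟩
  rw [hSeq, Set.ncard_coe_finset, Finset.card_image_of_injective _ hinj]
  have hcount := countA F htwo x₁⁻¹ x₂⁻¹ (inv_ne_zero h1) (inv_ne_zero h2) hy12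
  rw [hF] at hcount
  rw [← hA] at hcount
  set K := (2^m - 4) * (2^m - 8) with hK
  omega
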